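/- The restricted partition function W(s, d^m) is a quasi-polynomial in s of degree m - 1 with period τ = lcm(d_1,...,d_m): there exist functions Q_1,...,Q_m : ℤ → ℚ, where Q_j is periodic with period lcm(d_1,...,d_j), such that W(s, d^m) = Q_m(s) + Σ_{j=1}^{m-1} Q_j(s) · s^{m-j} for all sufficiently large (in fact all nonnegative) integers s. -/

import Mathlib

open Finset

/-- Restricted partition number: number of nonnegative integer solutions of
`∑ i, d i * x i = s`. -/
noncomputable def W {m : ℕ} (d : Fin m → ℕ) (s : ℤ) : ℕ :=
  Nat.card {x : Fin m → ℕ // ∑ i, (d i : ℤ) * (x i : ℤ) = s}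


lemma period_nsmul {f : ℤ → ℚ} {a : ℕ} (hf : ∀ s, f (s + (a:ℤ)) = f s) :
    ∀ (c : ℕ) (s : ℤ), f (s + (a:ℤ) * c) = f s := by
  intro c
  induction c with
  | zero => simp
  | succ c ih =>
    intro s
    have h1 : (a:ℤ) * ((c:ℕ)+1) = (a:ℤ)*c + a := by ring
    push_cast
    rw [h1, ← add_assoc, hf, ih]

lemma period_ext {f : ℤ → ℚ} {a b : ℕ} (hf : ∀ s, f (s + (a:ℤ)) = f s) (hab : a ∣ b) :
    ∀ s, f (s + (b:ℤ)) = f s := by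
  obtain ⟨c, rfl⟩ := hab
  intro s
  have h1 : ((a*c : ℕ) : ℤ) = (a:ℤ) * c := by push_cast; ring
  rw [h1, period_nsmul hf]

lemma mean_package {q N : ℕ} (hq : 0 < q) (hN : 0 < N) (h : ℤ → ℚ)
    (hper : ∀ s, h (s + ((N*q : ℕ):ℤ)) = h s) :
    ∃ M H : ℤ → ℚ,
      (∀ s, M (s + (q:ℤ)) = M s) ∧
      (∀ s, H (s + ((N*q:ℕ):ℤ)) = H s) ∧
      (∀ s, H s - H (s - (q:ℤ)) = h s - M s) := by
  have hN0 : (N:ℚ) ≠ 0 := Nat.cast_ne_zero.mpr hN.ne'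
  set M : ℤ → ℚ := fun s => (N:ℚ)⁻¹ * ∑ k ∈ range N, h (s + (q:ℤ)*k) with hM
  have hNq : ∀ s : ℤ, s + (q:ℤ)*N = s + ((N*q:ℕ):ℤ) := by intro s; push_cast; ring
  have key : ∀ s : ℤ, ∑ k ∈ range N, h (s + (q:ℤ)*(k+1)) = ∑ k ∈ range N, h (s + (q:ℤ)*k) := by
    intro s
    have h1 := Finset.sum_range_succ' (fun k => h (s + (q:ℤ)*k)) N
    have h2 := Finset.sum_range_succ (fun k => h (s + (q:ℤ)*k)) N
    simp only [Nat.cast_add, Nat.cast_zero, Nat.cast_one] at h1 h2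
    have h3 : h (s + (q:ℤ)*(N:ℕ)) = h (s + (q:ℤ)*(0:ℚ).num) := by
      rw [hNq, hper]; norm_num
    rw [h1] at h2
    simp only [mul_zero, add_zero] at h2 ⊢
    rw [hNq s] at h2
    rw [hper s] at h2
    linarith [h2]
  have hMq : ∀ s, M (s + (q:ℤ)) = M s := by
    intro s
    simp only [hM]
    congr 1
    have : ∀ k : ℕ, s + (q:ℤ) + (q:ℤ)*k = s + (q:ℤ)*(k+1) := by intro k; ring
    calc ∑ k ∈ range N, h (s + (q:ℤ) + (q:ℤ)*k)
        = ∑ k ∈ range N, h (s + (q:ℤ)*(k+1)) := by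
          exact Finset.sum_congr rfl (fun k _ => by rw [this k])
      _ = ∑ k ∈ range N, h (s + (q:ℤ)*k) := key s
  have hMNq : ∀ s, M (s + ((N*q:ℕ):ℤ)) = M s := period_ext hMq ⟨N, Nat.mul_comm N q⟩
  have hMk : ∀ (k : ℕ) (s : ℤ), M (s + (q:ℤ)*k) = M s := fun k s => period_nsmul hMq k s
  have hzero : ∀ s : ℤ, ∑ k ∈ range N, (h (s + (q:ℤ)*k) - M (s + (q:ℤ)*k)) = 0 := by
    intro s
    have : ∀ k ∈ range N, h (s + (q:ℤ)*k) - M (s + (q:ℤ)*k) = h (s + (q:ℤ)*k) - M s := by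
      intro k _; rw [hMk k s]
    rw [Finset.sum_congr rfl this, Finset.sum_sub_distrib, Finset.sum_const, card_range]
    simp only [hM, nsmul_eq_mul]
    field_simp
    simp
  -- h0
  set h₀ : ℤ → ℚ := fun s => h s - M s with hh₀
  have hh₀per : ∀ s, h₀ (s + ((N*q:ℕ):ℤ)) = h₀ s := by
    intro s; simp only [hh₀, hper s, hMNq s]
  set H₀ : ℤ → ℚ := fun s => ∑ k ∈ range N, ((k:ℚ)/N) * h₀ (s + (q:ℤ)*k) with hH₀
  have hstep : ∀ s, H₀ (s + (q:ℤ)) = H₀ s + h₀ s := by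
    intro s
    have hA := Finset.sum_range_succ' (fun k => ((k:ℚ)/N) * h₀ (s + (q:ℤ)*k)) N
    have hB := Finset.sum_range_succ (fun k => ((k:ℚ)/N) * h₀ (s + (q:ℤ)*k)) N
    rw [hA] at hB
    -- hB : ∑ k ∈ range N, ((k+1:ℚ)/N) * h₀ (s + q*(k+1)) + 0 = H₀ s + (N/N) * h₀ (s + q*N)
    simp only [Nat.cast_add, Nat.cast_zero, Nat.cast_one, mul_zero, add_zero, zero_div, zero_mul] at hB
    have hBN : h₀ (s + (q:ℤ)*(N:ℕ)) = h₀ s := by rw [hNq, hh₀per]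
    rw [hBN] at hB
    rw [div_self hN0, one_mul] at hB
    -- now: H₀ (s+q) = A - (1/N) * ∑ h₀ ((s+q) + q k)
    have hz := hzero (s + (q:ℤ))
    have expand : H₀ (s + (q:ℤ)) = ∑ k ∈ range N, ((k:ℚ)/N) * h₀ (s + (q:ℤ)*(k+1)) := by
      simp only [hH₀]
      exact Finset.sum_congr rfl (fun k _ => by ring_nf)
    have split : ∑ k ∈ range N, (((k:ℚ)+1)/N) * h₀ (s + (q:ℤ)*(k+1))
        = ∑ k ∈ range N, ((k:ℚ)/N) * h₀ (s + (q:ℤ)*(k+1))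
          + (N:ℚ)⁻¹ * ∑ k ∈ range N, h₀ ((s + (q:ℤ)) + (q:ℤ)*k) := by
      rw [Finset.mul_sum, ← Finset.sum_add_distrib]
      apply Finset.sum_congr rfl
      intro k _
      have : (s + (q:ℤ)) + (q:ℤ)*k = s + (q:ℤ)*(k+1) := by ring
      rw [this]
      field_simp
    rw [hz, mul_zero, add_zero] at split
    rw [expand, ← split, hB]
  refine ⟨M, fun s => H₀ (s + (q:ℤ)), hMq, ?_, ?_⟩
  · intro s
    simp only [hH₀]
    apply Finset.sum_congr rfl
    intro k _
    have : s + ((N*q:ℕ):ℤ) + (q:ℤ) + (q:ℤ)*k = (s + (q:ℤ) + (q:ℤ)*k) + ((N*q:ℕ):ℤ) := by ring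
    rw [this, hh₀per]
  · intro s
    show H₀ (s + (q:ℤ)) - H₀ (s - (q:ℤ) + (q:ℤ)) = h s - M s
    rw [show s - (q:ℤ) + (q:ℤ) = s by ring, hstep s]
    simp only [hh₀]
    ring


lemma central_algebra (e q : ℕ) (A B C : ℚ) (x : ℚ) :
    A * (x^(e+2) - (x - q)^(e+2)) + B * x^(e+1) - (B - C) * (x - q)^(e+1)
    = (A * ((q:ℚ) * (e+2)) + C) * x^(e+1)
      + ∑ i ∈ range (e+1),
          ((-A * (Nat.choose (e+2) i) * (-(q:ℚ))^(e+2-i))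
            + (-(B - C)) * (Nat.choose (e+1) i) * (-(q:ℚ))^(e+1-i)) * x^i := by
  have b1 : (x - (q:ℚ))^(e+2)
      = (∑ i ∈ range (e+1), x^i * (-(q:ℚ))^(e+2-i) * (Nat.choose (e+2) i))
        + x^(e+1) * (-(q:ℚ)) * (e+2) + x^(e+2) := by
    rw [sub_eq_add_neg, add_pow]
    rw [Finset.sum_range_succ, Finset.sum_range_succ]
    simp only [Nat.choose_self, Nat.cast_one, mul_one, Nat.sub_self, pow_zero,
      Nat.choose_succ_self_right]
    have : e + 2 - (e+1) = 1 := by omega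
    rw [this]
    push_cast
    ring
  have b2 : (x - (q:ℚ))^(e+1)
      = (∑ i ∈ range (e+1), x^i * (-(q:ℚ))^(e+1-i) * (Nat.choose (e+1) i)) + x^(e+1) := by
    rw [sub_eq_add_neg, add_pow]
    rw [Finset.sum_range_succ]
    simp only [Nat.choose_self, Nat.cast_one, mul_one, Nat.sub_self, pow_zero]
  rw [b1, b2]
  rw [Finset.sum_congr rfl (fun i _ => show
      ((-A * (Nat.choose (e+2) i) * (-(q:ℚ))^(e+2-i))
            + (-(B - C)) * (Nat.choose (e+1) i) * (-(q:ℚ))^(e+1-i)) * x^i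
      = (-A) * (x^i * (-(q:ℚ))^(e+2-i) * (Nat.choose (e+2) i))
        + (-(B-C)) * (x^i * (-(q:ℚ))^(e+1-i) * (Nat.choose (e+1) i)) from by ring)]
  rw [Finset.sum_add_distrib, ← Finset.mul_sum, ← Finset.mul_sum]
  push_cast
  ring

lemma keyB : ∀ (e : ℕ) (q : ℕ), 0 < q → ∀ (p : ℕ → ℕ), (∀ i, 0 < p i) →
    (∀ i j, i ≤ j → j ≤ e → p j ∣ p i) →
    ∀ (h : ℕ → ℤ → ℚ), (∀ i, i ≤ e → ∀ s, h i (s + (p i : ℤ)) = h i s) →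
    ∃ c : ℕ → ℤ → ℚ,
      (∀ i, i ≤ e → ∀ s, c i (s + (Nat.lcm q (p i) : ℤ)) = c i s) ∧
      (∀ s, c (e+1) (s + (q : ℤ)) = c (e+1) s) ∧
      (∀ s : ℤ, (∑ i ∈ range (e+2), c i s * (s:ℚ) ^ i)
          - (∑ i ∈ range (e+2), c i (s - (q:ℤ)) * ((s:ℚ) - (q:ℚ)) ^ i)
        = ∑ i ∈ range (e+1), h i s * (s:ℚ) ^ i) := by
  intro e
  induction e with
  | zero =>
    intro q hq p hp _ h hh
    set lam := Nat.lcm q (p 0) with hlam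
    have hqlam : q ∣ lam := Nat.dvd_lcm_left _ _
    have hplam : p 0 ∣ lam := Nat.dvd_lcm_right _ _
    set N := lam / q with hN
    have hNq : N * q = lam := Nat.div_mul_cancel hqlam
    have hlampos : 0 < lam := Nat.lcm_pos hq (hp 0)
    have hNpos : 0 < N := by
      rcases Nat.eq_zero_or_pos N with h0 | h0
      · exfalso; rw [h0] at hNq; simp at hNq; omega
      · exact h0
    have hper : ∀ s, h 0 (s + ((N*q:ℕ):ℤ)) = h 0 s := by
      rw [hNq]
      exact period_ext (hh 0 le_rfl) hplam
    obtain ⟨M, H, hMq, hHlam, hHdiff⟩ := mean_package hq hNpos (h 0) hper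
    rw [hNq] at hHlam
    set cf : ℕ → ℤ → ℚ := fun i => if i = 1 then (fun s => M s / (q:ℚ)) else H with hcf
    have ce0 : cf 0 = H := by simp [hcf]
    have ce1 : cf 1 = fun s => M s / (q:ℚ) := by simp [hcf]
    refine ⟨cf, ?_, ?_, ?_⟩
    · intro i hi s
      interval_cases i
      rw [ce0]
      exact hHlam s
    · intro s
      rw [show (0+1) = 1 from rfl, ce1]
      show M (s + (q:ℤ)) / (q:ℚ) = M s / (q:ℚ)
      rw [hMq]
    · intro s
      have hq0 : (q:ℚ) ≠ 0 := Nat.cast_ne_zero.mpr hq.ne'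
      have hd := hHdiff s
      have hMs : M (s - (q:ℤ)) = M s := by
        have := hMq (s - (q:ℤ))
        rw [show s - (q:ℤ) + (q:ℤ) = s by ring] at this
        rw [this]
      simp only [Finset.sum_range_succ, Finset.sum_range_zero, zero_add, pow_zero,
        pow_one, mul_one]
      rw [ce0, ce1]
      show H s + M s / (q:ℚ) * (s:ℚ) - (H (s - (q:ℤ)) + M (s - (q:ℤ)) / (q:ℚ) * ((s:ℚ) - (q:ℚ))) = h 0 s
      rw [hMs]
      field_simp
      linear_combination (q:ℚ) * hd
  | succ e IH =>
    intro q hq p hp hpd h hh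
    -- package for the top term h (e+1)
    set lam := Nat.lcm q (p (e+1)) with hlam
    have hqlam : q ∣ lam := Nat.dvd_lcm_left _ _
    have hplam : p (e+1) ∣ lam := Nat.dvd_lcm_right _ _
    set N := lam / q with hN
    have hNq : N * q = lam := Nat.div_mul_cancel hqlam
    have hlampos : 0 < lam := Nat.lcm_pos hq (hp (e+1))
    have hNpos : 0 < N := by
      rcases Nat.eq_zero_or_pos N with h0 | h0
      · exfalso; rw [h0] at hNq; simp at hNq; omega
      · exact h0
    have hperE : ∀ s, h (e+1) (s + ((N*q:ℕ):ℤ)) = h (e+1) s := by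
      rw [hNq]
      exact period_ext (hh (e+1) le_rfl) hplam
    obtain ⟨M, H, hMq, hHlam, hHdiff⟩ := mean_package hq hNpos (h (e+1)) hperE
    rw [hNq] at hHlam
    have hMlam : ∀ s, M (s + (lam:ℤ)) = M s := period_ext hMq hqlam
    have hElam : ∀ s, h (e+1) (s + (lam:ℤ)) = h (e+1) s :=
      period_ext (hh (e+1) le_rfl) hplam
    have hq0 : (q:ℚ) ≠ 0 := Nat.cast_ne_zero.mpr hq.ne'
    have he2 : ((q:ℚ) * (e+2)) ≠ 0 := by positivity
    -- correction coefficients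
    set v : ℕ → ℤ → ℚ := fun i s =>
      (-(M s / ((q:ℚ)*(e+2))) * (Nat.choose (e+2) i) * (-(q:ℚ))^(e+2-i))
        + (-(H s - (h (e+1) s - M s))) * (Nat.choose (e+1) i) * (-(q:ℚ))^(e+1-i) with hv
    have hvper : ∀ i s, v i (s + (lam:ℤ)) = v i s := by
      intro i s
      simp only [hv, hMlam s, hElam s, hHlam s]
    -- T and the central difference identity
    set T : ℤ → ℚ := fun s => M s / ((q:ℚ)*(e+2)) * (s:ℚ)^(e+2) + H s * (s:ℚ)^(e+1) with hT
    have hTdiff : ∀ s : ℤ, T s - T (s - (q:ℤ))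
        = h (e+1) s * (s:ℚ)^(e+1) + ∑ i ∈ range (e+1), v i s * (s:ℚ)^i := by
      intro s
      have hMs : M (s - (q:ℤ)) = M s := by
        have := hMq (s - (q:ℤ)); rw [show s - (q:ℤ) + (q:ℤ) = s by ring] at this; rw [this]
      have hHs : H (s - (q:ℤ)) = H s - (h (e+1) s - M s) := by
        have := hHdiff s; linarith
      have hcast : ((s - (q:ℤ) : ℤ) : ℚ) = (s:ℚ) - (q:ℚ) := by push_cast; ring
      simp only [hT, hMs, hHs, hcast]
      have hCA := central_algebra e q (M s / ((q:ℚ)*(e+2))) (H s) (h (e+1) s - M s) (s:ℚ)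
      have hA : M s / ((q:ℚ)*(e+2)) * ((q:ℚ) * (e+2)) = M s := div_mul_cancel₀ _ he2
      rw [hA] at hCA
      have lhs_eq : M s / ((q:ℚ)*(e+2)) * (s:ℚ)^(e+2) + H s * (s:ℚ)^(e+1)
          - (M s / ((q:ℚ)*(e+2)) * ((s:ℚ) - (q:ℚ))^(e+2)
             + (H s - (h (e+1) s - M s)) * ((s:ℚ) - (q:ℚ))^(e+1))
          = M s / ((q:ℚ)*(e+2)) * ((s:ℚ)^(e+2) - ((s:ℚ) - (q:ℚ))^(e+2))
            + H s * (s:ℚ)^(e+1)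
            - (H s - (h (e+1) s - M s)) * ((s:ℚ) - (q:ℚ))^(e+1) := by ring
      rw [lhs_eq, hCA]
      rw [show M s + (h (e+1) s - M s) = h (e+1) s by ring]
    -- new data for IH
    set p' : ℕ → ℕ := fun i => Nat.lcm q (p i) with hp'
    have hp'pos : ∀ i, 0 < p' i := fun i => Nat.lcm_pos hq (hp i)
    have hp'd : ∀ i j, i ≤ j → j ≤ e → p' j ∣ p' i := by
      intro i j hij hje
      exact Nat.lcm_dvd (Nat.dvd_lcm_left _ _)
        ((hpd i j hij (hje.trans (Nat.le_succ e))).trans (Nat.dvd_lcm_right _ _))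
    set h' : ℕ → ℤ → ℚ := fun i s => h i s - v i s with hh'
    have hlamdvd : ∀ i, i ≤ e → lam ∣ p' i := by
      intro i hie
      exact Nat.lcm_dvd (Nat.dvd_lcm_left _ _)
        ((hpd i (e+1) (by omega) le_rfl).trans (Nat.dvd_lcm_right _ _))
    have hh'per : ∀ i, i ≤ e → ∀ s, h' i (s + (p' i : ℤ)) = h' i s := by
      intro i hie s
      simp only [hh']
      rw [period_ext (fun t => hh i (by omega) t) (Nat.dvd_lcm_right q (p i)),
        period_ext (fun t => hvper i t) (hlamdvd i hie)]
    obtain ⟨c', hc'1, hc'2, hc'3⟩ := IH q hq p' hp'pos hp'd h' hh'per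
    -- assemble final coefficients
    set cf : ℕ → ℤ → ℚ := fun i => if i = e+2 then (fun s => M s / ((q:ℚ)*(e+2)))
      else if i = e+1 then (fun s => H s + c' (e+1) s) else c' i with hcf
    have ce0 : ∀ i, i < e+1 → cf i = c' i := by
      intro i hi
      simp only [hcf]
      rw [if_neg (by omega : ¬ (i = e+2)), if_neg (by omega : ¬ (i = e+1))]
    have ce1 : cf (e+1) = (fun s => H s + c' (e+1) s) := by
      simp only [hcf]
      rw [if_neg (by omega : ¬ (e+1 = e+2))]
      simp
    have ce2 : cf (e+2) = (fun s => M s / ((q:ℚ)*(e+2))) := by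
      simp [hcf]
    have expand : ∀ t : ℤ, (∑ i ∈ range (e+3), cf i t * ((t:ℚ))^i)
        = (∑ i ∈ range (e+2), c' i t * (t:ℚ)^i) + T t := by
      intro t
      rw [Finset.sum_range_succ, Finset.sum_range_succ]
      rw [Finset.sum_congr rfl (fun i hi => by
        rw [ce0 i (Finset.mem_range.mp hi)])]
      rw [Finset.sum_range_succ (fun i => c' i t * (t:ℚ)^i) (e+1), ce1, ce2]
      simp only [hT]
      ring
    refine ⟨cf, ?_, ?_, ?_⟩
    · intro i hie s
      rcases Nat.lt_or_ge i (e+1) with hi | hi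
      · rw [ce0 i hi]
        have := hc'1 i (by omega) s
        rw [show Nat.lcm q (p' i) = Nat.lcm q (p i) from by
          simp only [hp', ← Nat.lcm_assoc, Nat.lcm_self]] at this
        exact this
      · have h1 : i = e+1 := by omega
        subst h1
        rw [ce1]
        show H (s + ((Nat.lcm q (p (e+1)) : ℕ) : ℤ)) + c' (e+1) (s + ((Nat.lcm q (p (e+1)) : ℕ) : ℤ))
          = H s + c' (e+1) s
        rw [show ((Nat.lcm q (p (e+1)) : ℕ) : ℤ) = ((lam:ℕ):ℤ) from by rw [hlam]]
        rw [hHlam s, period_ext hc'2 hqlam s]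
    · intro s
      rw [show e+1+1 = e+2 from rfl, ce2]
      show M (s + (q:ℤ)) / ((q:ℚ)*(e+2)) = M s / ((q:ℚ)*(e+2))
      rw [hMq]
    · intro s
      have hcast : ((s - (q:ℤ) : ℤ) : ℚ) = (s:ℚ) - (q:ℚ) := by push_cast; ring
      rw [show e+1+2 = e+3 from rfl, show e+1+1 = e+2 from rfl]
      rw [show ((s:ℚ) - (q:ℚ)) = ((s - (q:ℤ) : ℤ) : ℚ) from hcast.symm]
      rw [expand s, expand (s - (q:ℤ))]
      rw [hcast]
      have hcc := hc'3 s
      have hT' := hTdiff s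
      simp only [hh'] at hcc
      rw [Finset.sum_range_succ (fun i => h i s * (s:ℚ)^i) (e+1)]
      calc (∑ i ∈ range (e+2), c' i s * (s:ℚ)^i) + T s
          - ((∑ i ∈ range (e+2), c' i (s - (q:ℤ)) * ((s:ℚ) - (q:ℚ))^i) + T (s - (q:ℤ)))
          = ((∑ i ∈ range (e+2), c' i s * (s:ℚ)^i)
              - (∑ i ∈ range (e+2), c' i (s - (q:ℤ)) * ((s:ℚ) - (q:ℚ))^i))
            + (T s - T (s - (q:ℤ))) := by ring
        _ = (∑ i ∈ range (e+1), (h i s - v i s) * (s:ℚ)^i)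
            + (h (e+1) s * (s:ℚ)^(e+1) + ∑ i ∈ range (e+1), v i s * (s:ℚ)^i) := by
            rw [hcc, hT']
        _ = (∑ i ∈ range (e+1), h i s * (s:ℚ)^i) + h (e+1) s * (s:ℚ)^(e+1) := by
            rw [Finset.sum_congr rfl (fun i _ => show (h i s - v i s) * (s:ℚ)^i
              = h i s * (s:ℚ)^i - v i s * (s:ℚ)^i from by ring)]
            rw [Finset.sum_sub_distrib]
            ring

lemma sol_finite {m : ℕ} (d : Fin m → ℕ) (hd : ∀ i, 0 < d i) (s : ℤ) :
    Finite {x : Fin m → ℕ // ∑ i, (d i : ℤ) * (x i : ℤ) = s} := by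
  by_cases hne : Nonempty {x : Fin m → ℕ // ∑ i, (d i : ℤ) * (x i : ℤ) = s}
  · obtain ⟨⟨x₀, hx₀⟩⟩ := hne
    have hs : 0 ≤ s := by
      rw [← hx₀]
      exact Finset.sum_nonneg (fun i _ => by positivity)
    have bound : ∀ (x : {x : Fin m → ℕ // ∑ i, (d i : ℤ) * (x i : ℤ) = s}) (i : Fin m),
        x.1 i < s.toNat + 1 := by
      rintro ⟨x, hx⟩ i
      show x i < s.toNat + 1
      have h1 : (x i : ℤ) ≤ (d i : ℤ) * (x i : ℤ) := by
        have : (1:ℤ) ≤ (d i : ℤ) := by exact_mod_cast hd i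
        nlinarith [Int.ofNat_nonneg (x i)]
      have h2 : (d i : ℤ) * (x i : ℤ) ≤ s := by
        rw [← hx]
        exact Finset.single_le_sum (f := fun j => (d j : ℤ) * (x j : ℤ))
          (fun j _ => by positivity) (Finset.mem_univ i)
      have h3 : (x i : ℤ) ≤ s := h1.trans h2
      omega
    apply Finite.of_injective (fun x => (fun i => (⟨x.1 i, bound x i⟩ : Fin (s.toNat + 1))))
    intro x y hxy
    apply Subtype.ext
    funext i
    have := congrFun hxy i
    simpa [Fin.ext_iff] using this
  · rw [not_nonempty_iff] at hne
    infer_instance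

lemma W_rec {m : ℕ} (d : Fin (m+1) → ℕ) (hd : ∀ i, 0 < d i) (n : ℕ) :
    (W d (n:ℤ)) = ∑ k ∈ Finset.range (n / d 0 + 1),
      W (fun i : Fin m => d i.succ) ((n:ℤ) - (d 0 : ℤ) * (k:ℤ)) := by
  classical
  set d' : Fin m → ℕ := fun i => d i.succ with hd'
  set K := n / d 0 with hK
  -- the equivalence
  have key : ∀ (x : Fin (m+1) → ℕ), (∑ i, (d i : ℤ) * (x i : ℤ) = (n:ℤ)) →
      x 0 < K + 1 := by
    intro x hx
    have h2 : (d 0 : ℤ) * (x 0 : ℤ) ≤ (n:ℤ) := by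
      rw [← hx]
      exact Finset.single_le_sum (f := fun j => (d j : ℤ) * (x j : ℤ))
        (fun j _ => by positivity) (Finset.mem_univ 0)
    have h3 : d 0 * x 0 ≤ n := by exact_mod_cast h2
    have : x 0 ≤ K := Nat.le_div_iff_mul_le (hd 0) |>.mpr (by rwa [Nat.mul_comm] at h3)
    omega
  set E : {x : Fin (m+1) → ℕ // ∑ i, (d i : ℤ) * (x i : ℤ) = (n:ℤ)} ≃
      Σ k : Fin (K+1), {y : Fin m → ℕ //
        ∑ i, (d' i : ℤ) * (y i : ℤ) = (n:ℤ) - (d 0 : ℤ) * ((k:ℕ):ℤ)} := {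
    toFun := fun x => ⟨⟨x.1 0, key x.1 x.2⟩, ⟨fun i => x.1 i.succ, by
      have := x.2
      rw [Fin.sum_univ_succ] at this
      simp only [hd']
      omega⟩⟩
    invFun := fun kz => ⟨Fin.cons kz.1.1 kz.2.1, by
      rw [Fin.sum_univ_succ]
      simp only [Fin.cons_zero, Fin.cons_succ]
      have := kz.2.2
      simp only [hd'] at this
      omega⟩
    left_inv := fun x => Subtype.ext (Fin.cons_self_tail x.1)
    right_inv := fun kz => by
      rcases kz with ⟨k, z, hz⟩
      refine Sigma.subtype_ext (Fin.ext ?_) ?_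
      · simp
      · funext i
        simp }
  have hfin : ∀ k : Fin (K+1), Finite {y : Fin m → ℕ //
      ∑ i, (d' i : ℤ) * (y i : ℤ) = (n:ℤ) - (d 0 : ℤ) * ((k:ℕ):ℤ)} :=
    fun k => sol_finite d' (fun i => hd i.succ) _
  haveI := hfin
  haveI : ∀ k : Fin (K+1), Fintype {y : Fin m → ℕ //
      ∑ i, (d' i : ℤ) * (y i : ℤ) = (n:ℤ) - (d 0 : ℤ) * ((k:ℕ):ℤ)} :=
    fun k => Fintype.ofFinite _
  rw [W, Nat.card_congr E, Nat.card_eq_fintype_card, Fintype.card_sigma]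
  rw [← Fin.sum_univ_eq_sum_range (fun k => W d' ((n:ℤ) - (d 0 : ℤ) * (k:ℤ))) (K+1)]
  apply Finset.sum_congr rfl
  intro k _
  rw [W, Nat.card_eq_fintype_card]

lemma W_one (d : Fin 1 → ℕ) (hd : 0 < d 0) (s : ℤ) (hs : 0 ≤ s) :
    ((W d s : ℚ)) = if (d 0 : ℤ) ∣ s then 1 else 0 := by
  rw [W]
  have hsum : ∀ x : Fin 1 → ℕ, (∑ i, (d i : ℤ) * (x i : ℤ)) = (d 0 : ℤ) * (x 0 : ℤ) := by
    intro x
    rw [Fin.sum_univ_one]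
  split_ifs with hdvd
  · obtain ⟨t, ht⟩ := hdvd
    have ht0 : 0 ≤ t := by
      by_contra hneg
      push_neg at hneg
      have : (d 0 : ℤ) > 0 := by exact_mod_cast hd
      nlinarith
    have : Nat.card {x : Fin 1 → ℕ // ∑ i, (d i : ℤ) * (x i : ℤ) = s} = 1 := by
      rw [Nat.card_eq_one_iff_unique]
      constructor
      · constructor
        rintro ⟨x, hx⟩ ⟨y, hy⟩
        rw [hsum] at hx hy
        apply Subtype.ext
        funext i
        have hi : i = 0 := Subsingleton.elim i 0
        subst hi
        have hd0 : (d 0 : ℤ) ≠ 0 := by positivity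
        have hxy : (x 0 : ℤ) = (y 0 : ℤ) := mul_left_cancel₀ hd0 (hx.trans hy.symm)
        exact_mod_cast hxy
      · refine ⟨fun _ => t.toNat, ?_⟩
        rw [hsum]
        show (d 0 : ℤ) * ((t.toNat : ℕ) : ℤ) = s
        rw [Int.toNat_of_nonneg ht0]
        omega
    rw [this]
    norm_num
  · have : IsEmpty {x : Fin 1 → ℕ // ∑ i, (d i : ℤ) * (x i : ℤ) = s} := by
      constructor
      rintro ⟨x, hx⟩
      rw [hsum] at hx
      exact hdvd ⟨(x 0 : ℤ), hx.symm⟩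
    rw [Nat.card_of_isEmpty]
    norm_num

lemma Iic_zero_lcm {m : ℕ} (d : Fin (m+1) → ℕ) :
    (Finset.Iic (0 : Fin (m+1))).lcm d = d 0 := by
  have : Finset.Iic (0 : Fin (m+1)) = {0} := by
    ext i
    simp [Fin.le_zero_iff]
  rw [this, Finset.lcm_singleton]
  simp [normalize_eq]

set_option maxHeartbeats 1000000 in
lemma Iic_succ_lcm {m : ℕ} (d : Fin (m+1) → ℕ) (j : Fin m) :
    (Finset.Iic j.succ).lcm d = Nat.lcm (d 0) ((Finset.Iic j).lcm (fun i => d i.succ)) := by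
  apply Nat.dvd_antisymm
  · apply Finset.lcm_dvd
    intro i hi
    rw [Finset.mem_Iic] at hi
    rcases Fin.eq_zero_or_eq_succ i with rfl | ⟨k, rfl⟩
    · exact Nat.dvd_lcm_left _ _
    · have hk : k ≤ j := by
        rwa [Fin.succ_le_succ_iff] at hi
      have h1 : d k.succ ∣ (Finset.Iic j).lcm (fun i => d i.succ) :=
        Finset.dvd_lcm (Finset.mem_Iic.mpr hk)
      exact h1.trans (Nat.dvd_lcm_right _ _)
  · apply Nat.lcm_dvd
    · exact Finset.dvd_lcm (Finset.mem_Iic.mpr (Fin.zero_le _))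
    · apply Finset.lcm_dvd
      intro k hk
      exact Finset.dvd_lcm (Finset.mem_Iic.mpr (Fin.succ_le_succ_iff.mpr (Finset.mem_Iic.mp hk)))

lemma main_aux : ∀ (m : ℕ) (d : Fin (m+1) → ℕ), (∀ i, 0 < d i) →
    ∃ Q : Fin (m+1) → ℤ → ℚ,
      (∀ j : Fin (m+1), ∀ s : ℤ, Q j (s + (((Finset.Iic j).lcm d : ℕ) : ℤ)) = Q j s) ∧
      (∀ s : ℤ, 0 ≤ s →
        (W d s : ℚ) = ∑ j : Fin (m+1), Q j s * (s : ℚ) ^ (m - (j : ℕ))) := by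
  intro m
  induction m with
  | zero =>
    intro d hd
    refine ⟨fun _ s => if (d 0 : ℤ) ∣ s then 1 else 0, ?_, ?_⟩
    · intro j s
      have hj : j = 0 := by
        have h0 := j.isLt
        apply Fin.ext
        simp only [Fin.val_zero]
        omega
      subst hj
      rw [Iic_zero_lcm]
      simp only [dvd_add_self_right]
    · intro s hs
      rw [Fin.sum_univ_one, W_one d (hd 0) s hs]
      simp
  | succ m IH =>
    intro d hd
    set d' : Fin (m+1) → ℕ := fun i => d i.succ with hd'def
    obtain ⟨Q', hQ'per, hQ'eq⟩ := IH d' (fun i => hd i.succ)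
    have hq : 0 < d 0 := hd 0
    set jdx : ℕ → Fin (m+1) := fun i => (⟨m - i, by omega⟩ : Fin (m+1)) with hjdx
    set p : ℕ → ℕ := fun i => (Finset.Iic (jdx i)).lcm d' with hpdef
    set h : ℕ → ℤ → ℚ := fun i => Q' (jdx i) with hhdef
    have hppos : ∀ i, 0 < p i := by
      intro i
      rcases Nat.eq_zero_or_pos (p i) with h0 | h0
      · exfalso
        have h0' : (Finset.Iic (jdx i)).lcm d' = 0 := h0
        rw [Finset.lcm_eq_zero_iff] at h0'
        obtain ⟨a, -, ha⟩ := h0'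
        exact (hd a.succ).ne' ha
      · exact h0
    have hpd : ∀ i j, i ≤ j → j ≤ m → p j ∣ p i := by
      intro i j hij hjm
      apply Finset.lcm_dvd
      intro b hb
      apply Finset.dvd_lcm
      rw [Finset.mem_Iic] at hb ⊢
      refine hb.trans ?_
      simp only [hjdx, Fin.mk_le_mk]
      omega
    have hper : ∀ i, i ≤ m → ∀ s, h i (s + (p i : ℤ)) = h i s := fun i _ s => hQ'per (jdx i) s
    obtain ⟨c, hc1, hc2, hc3⟩ := keyB m (d 0) hq p hppos hpd h hper
    set P : ℤ → ℚ := fun t => ∑ i ∈ range (m+2), c i t * (t:ℚ)^i with hPdef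
    -- rewrite of tail partition counts
    have fRW : ∀ t : ℤ, 0 ≤ t → ((W d' t : ℚ)) = ∑ i ∈ range (m+1), h i t * (t:ℚ)^i := by
      intro t ht
      rw [hQ'eq t ht]
      calc ∑ j : Fin (m+1), Q' j t * (t:ℚ)^(m - (j:ℕ))
          = ∑ j : Fin (m+1), h (m - (j:ℕ)) t * (t:ℚ)^(m - (j:ℕ)) := by
            apply Finset.sum_congr rfl
            intro j _
            have hj : jdx (m - (j:ℕ)) = j := by
              apply Fin.ext
              simp only [hjdx]
              omega
            simp only [hhdef, hj]
        _ = ∑ jn ∈ range (m+1), h (m - jn) t * (t:ℚ)^(m - jn) :=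
            Fin.sum_univ_eq_sum_range (fun jn => h (m - jn) t * (t:ℚ)^(m - jn)) (m+1)
        _ = ∑ i ∈ range (m+1), h i t * (t:ℚ)^i := by
            have hr := Finset.sum_range_reflect (fun i => h i t * (t:ℚ)^i) (m+1)
            simp only [Nat.add_sub_cancel] at hr
            exact hr
    -- telescoping identity
    have tele : ∀ n : ℕ, (W d ((n:ℕ):ℤ) : ℚ)
        = P (n:ℤ) - P ((((n % d 0 : ℕ)):ℤ) - ((d 0 : ℕ):ℤ)) := by
      intro n
      rw [W_rec d hd n, ← hd'def]
      push_cast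
      have harg : ∀ k ∈ range (n / d 0 + 1), (0:ℤ) ≤ (n:ℤ) - (d 0:ℤ) * (k:ℤ) := by
        intro k hk
        rw [Finset.mem_range] at hk
        have h1 : d 0 * k ≤ d 0 * (n / d 0) := Nat.mul_le_mul_left _ (by omega)
        have h2 : n / d 0 * d 0 ≤ n := Nat.div_mul_le_self n (d 0)
        have h3 : d 0 * k ≤ n := by
          calc d 0 * k ≤ d 0 * (n / d 0) := h1
            _ = n / d 0 * d 0 := Nat.mul_comm _ _
            _ ≤ n := h2
        have := (Int.ofNat_le).mpr h3
        push_cast at this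
        omega
      rw [Finset.sum_congr rfl (fun (k : ℕ) (hk : k ∈ range (n / d 0 + 1)) =>
        fRW ((n:ℤ) - (d 0:ℤ) * (k:ℤ)) (harg k hk))]
      have step : ∀ k : ℕ, ∑ i ∈ range (m+1),
          h i ((n:ℤ) - (d 0:ℤ)*(k:ℤ)) * ((((n:ℤ) - (d 0:ℤ)*(k:ℤ)):ℤ):ℚ)^i
          = P ((n:ℤ) - (d 0:ℤ)*(k:ℤ)) - P ((n:ℤ) - (d 0:ℤ)*(k:ℤ) - (d 0:ℤ)) := by
        intro k
        have hc := hc3 ((n:ℤ) - (d 0:ℤ)*(k:ℤ))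
        have hpt : P ((n:ℤ) - (d 0:ℤ)*(k:ℤ) - (d 0:ℤ))
            = ∑ i ∈ range (m+2), c i ((n:ℤ) - (d 0:ℤ)*(k:ℤ) - (d 0:ℤ))
              * (((((n:ℤ) - (d 0:ℤ)*(k:ℤ)):ℤ):ℚ) - ((d 0:ℕ):ℚ))^i := by
          simp only [hPdef]
          apply Finset.sum_congr rfl
          intro i _
          congr 1
          push_cast
          ring
        rw [hpt]
        simp only [hPdef]
        exact hc.symm
      have conv : ∀ k : ℕ, P ((n:ℤ) - (d 0:ℤ)*(k:ℤ) - (d 0:ℤ))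
          = P ((n:ℤ) - (d 0:ℤ)*(((k+1:ℕ)):ℤ)) := by
        intro k
        congr 1
        push_cast
        ring
      rw [Finset.sum_congr rfl (fun (k : ℕ) (_ : k ∈ range (n / d 0 + 1)) => (step k).trans
        (by rw [conv k]))]
      have tel := Finset.sum_range_sub' (fun k : ℕ => P ((n:ℤ) - (d 0:ℤ)*(k:ℤ))) (n / d 0 + 1)
      rw [tel]
      have harg0 : (n:ℤ) - (d 0:ℤ)*((0:ℕ):ℤ) = (n:ℤ) := by norm_num
      have hargN : (n:ℤ) - (d 0:ℤ)*(((n / d 0 + 1 : ℕ)):ℤ) = ((n % d 0:ℕ):ℤ) - ((d 0:ℕ):ℤ) := by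
        have hmod : (d 0:ℤ) * ((n / d 0 : ℕ):ℤ) + ((n % d 0:ℕ):ℤ) = (n:ℤ) := by
          exact_mod_cast Nat.div_add_mod n (d 0)
        push_cast at hmod ⊢
        linear_combination -hmod
      rw [harg0, hargN]
      push_cast
      ring
    -- final coefficients
    set Q : Fin (m+2) → ℤ → ℚ := fun J s => c (m+1 - (J:ℕ)) s +
      (if (J:ℕ) = m+1 then -(P ((s % ((d 0:ℕ):ℤ)) - ((d 0:ℕ):ℤ))) else 0) with hQdef
    refine ⟨Q, ?_, ?_⟩
    · intro J s
      induction J using Fin.cases with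
      | zero =>
        rw [Iic_zero_lcm d]
        simp only [hQdef, Fin.val_zero]
        simp only [show ¬ (0 = m+1) by omega, if_false, ↓reduceIte]
        rw [add_zero, add_zero, Nat.sub_zero]
        exact hc2 s
      | succ j =>
        rw [Iic_succ_lcm d j]
        simp only [hQdef, Fin.val_succ]
        have hidx : m + 1 - ((j:ℕ)+1) = m - (j:ℕ) := by omega
        have hjdxeq : jdx (m - (j:ℕ)) = j := by
          apply Fin.ext
          simp only [hjdx]
          omega
        have hcper := hc1 (m - (j:ℕ)) (by omega) s
        have hplcm : p (m - (j:ℕ)) = (Finset.Iic j).lcm d' := by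
          simp only [hpdef, hjdxeq]
        rw [hplcm] at hcper
        have hqdvd : (d 0 : ℤ) ∣ ((Nat.lcm (d 0) ((Finset.Iic j).lcm d') : ℕ):ℤ) := by
          exact_mod_cast Int.natCast_dvd_natCast.mpr (Nat.dvd_lcm_left _ _)
        congr 1
        · rw [hidx]
          exact hcper
        · rcases eq_or_ne ((j:ℕ)+1) (m+1) with hj1 | hj1
          · rw [if_pos hj1, if_pos hj1]
            obtain ⟨cd, hcd⟩ := hqdvd
            congr 2
            rw [hcd, Int.add_mul_emod_self_left]
          · rw [if_neg hj1, if_neg hj1]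
    · intro s hs
      obtain ⟨n, rfl⟩ := Int.eq_ofNat_of_zero_le hs
      rw [tele n]
      have hsplit : ∑ J : Fin (m+2), Q J (n:ℤ) * ((n:ℤ):ℚ)^(m+1 - (J:ℕ))
          = P (n:ℤ) - P ((((n % d 0 : ℕ)):ℤ) - ((d 0:ℕ):ℤ)) := by
        simp only [hQdef, add_mul]
        rw [Finset.sum_add_distrib]
        have part1 : ∑ J : Fin (m+2), c (m+1 - (J:ℕ)) (n:ℤ) * ((n:ℤ):ℚ)^(m+1 - (J:ℕ))
            = P (n:ℤ) := by
          rw [Fin.sum_univ_eq_sum_range (fun jn => c (m+1-jn) (n:ℤ) * ((n:ℤ):ℚ)^(m+1-jn)) (m+2)]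
          have hr := Finset.sum_range_reflect (fun i => c i (n:ℤ) * ((n:ℤ):ℚ)^i) (m+2)
          simp only [show m + 2 - 1 = m + 1 by omega] at hr
          exact hr
        have part2 : ∑ J : Fin (m+2), (if (J:ℕ) = m+1 then
              -(P ((((n:ℤ)) % ((d 0:ℕ):ℤ)) - ((d 0:ℕ):ℤ))) else 0) * ((n:ℤ):ℚ)^(m+1 - (J:ℕ))
            = -(P ((((n % d 0 : ℕ)):ℤ) - ((d 0:ℕ):ℤ))) := by
          rw [Finset.sum_eq_single (Fin.last (m+1))]
          · rw [if_pos (by simp [Fin.val_last])]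
            simp only [Fin.val_last, Nat.sub_self, pow_zero, mul_one]
            have hargs : ((n:ℤ) % ((d 0:ℕ):ℤ)) - ((d 0:ℕ):ℤ)
                = (((n % d 0:ℕ)):ℤ) - ((d 0:ℕ):ℤ) := by push_cast; ring
            rw [hargs]
          · intro b _ hb
            rw [if_neg (fun hbv => hb (Fin.ext (by simp [Fin.val_last, hbv])))]
            rw [zero_mul]
          · intro hmem
            exact absurd (Finset.mem_univ _) hmem
        rw [part1, part2]
        ring
      rw [hsplit]

theorem stmt16 {m : ℕ} (hm : 1 ≤ m) (d : Fin m → ℕ) (hd : ∀ i, 0 < d i)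
    (hmono : Monotone d) :
    ∃ Q : Fin m → ℤ → ℚ,
      (∀ j : Fin m, ∀ s : ℤ, Q j (s + (((Finset.Iic j).lcm d : ℕ) : ℤ)) = Q j s) ∧
      (∀ s : ℤ, 0 ≤ s →
        (W d s : ℚ) = ∑ j : Fin m, Q j s * (s : ℚ) ^ (m - 1 - (j : ℕ))) := by
  obtain ⟨m', rfl⟩ : ∃ k, m = k + 1 := ⟨m - 1, by omega⟩
  obtain ⟨Q, h1, h2⟩ := main_aux m' d hd
  refine ⟨Q, h1, ?_⟩
  intro s hs
  rw [h2 s hs]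
  apply Finset.sum_congr rfl
  intro j _
  have hexp : m' + 1 - 1 - (j:ℕ) = m' - (j:ℕ) := by omega
  rw [hexp]
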